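/- Assume φ(x,x',y) ∧ eo*(x) is a PC encoding of a constraint f(x,x'), and eo'(x,z) is a PC encoding of EO(x) with auxiliary variables z such that for every literal l on a variable of z there is a partial assignment h(l) ⊆ lit(x) with eo'(x,z) ⊨ (l ↔ h(l)) (where h(l) is read as the conjunction of its literals). Then φ(x,x',y) ∧ eo'(x,z) is a PC encoding of f(x,x'). -/

import Mathlib

set_option autoImplicit false

universe u v

/-- A literal: a boolean variable together with a polarity. -/
structure Lit (V : Type u) where
  var : V
  pos : Bool

/-- The complementary literal. -/
def Lit.negate {V : Type u} (l : Lit V) : Lit V := ⟨l.var, !l.pos⟩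

/-- A literal is satisfied by a total assignment. -/
def Lit.eval {V : Type u} (a : V → Bool) (l : Lit V) : Prop := a l.var = l.pos

/-- A clause is a (finite in all our uses) disjunction of a set of literals. -/
abbrev Clause (V : Type u) := Set (Lit V)

/-- A CNF formula is a conjunction of a set of clauses. -/
abbrev CNF (V : Type u) := Set (Clause V)

/-- A clause is satisfied iff some of its literals is. -/
def Clause.Sat {V : Type u} (a : V → Bool) (C : Clause V) : Prop := ∃ l ∈ C, Lit.eval a l

/-- A CNF formula is satisfied iff all of its clauses are. -/
def CNF.Sat {V : Type u} (a : V → Bool) (φ : CNF V) : Prop := ∀ C ∈ φ, Clause.Sat a C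

def CNF.Satisfiable {V : Type u} (φ : CNF V) : Prop := ∃ a : V → Bool, CNF.Sat a φ

/-- `φ ⊨ l`. -/
def CNF.Entails {V : Type u} (φ : CNF V) (l : Lit V) : Prop :=
  ∀ a : V → Bool, CNF.Sat a φ → Lit.eval a l

/-- A partial assignment, i.e. a set of literals, is consistent if it contains
no complementary pair of literals. -/
def ConsistentPA {V : Type u} (α : Set (Lit V)) : Prop := ∀ l ∈ α, Lit.negate l ∉ α

/-- The set of unit clauses corresponding to a partial assignment `α`;
`φ ∪ paUnits α` represents `φ ∧ α`. -/
def paUnits {V : Type u} (α : Set (Lit V)) : CNF V := (fun l => ({l} : Clause V)) '' α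

/-- Derivability by repeated unit resolution: from a clause `C ∋ l` and the unit
clause `¬l` derive `C \ {l}`.  `UnitDeriv φ ∅` means `φ ⊢₁ ⊥` and
`UnitDeriv φ {l}` means `φ ⊢₁ l`. -/
inductive UnitDeriv {V : Type u} (φ : CNF V) : Clause V → Prop where
  | base {C : Clause V} : C ∈ φ → UnitDeriv φ C
  | step {C : Clause V} (l : Lit V) : l ∈ C → UnitDeriv φ C →
      UnitDeriv φ {Lit.negate l} → UnitDeriv φ (C \ {l})

/-- The set of variables occurring in a CNF formula. -/
def CNF.vars {V : Type u} (φ : CNF V) : Set V := ⋃ C ∈ φ, Lit.var '' C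

/-- All literals of `α` are literals on the variables `W`. -/
def LitsOn {V : Type u} (α : Set (Lit V)) (W : Set V) : Prop := ∀ l ∈ α, l.var ∈ W

/-- `φ` is unit refutation complete on the variables `W`. -/
def URCon {V : Type u} (φ : CNF V) (W : Set V) : Prop :=
  ∀ α : Set (Lit V), ConsistentPA α → LitsOn α W →
    ¬ CNF.Satisfiable (φ ∪ paUnits α) → UnitDeriv (φ ∪ paUnits α) ∅

/-- `φ` is propagation complete on the variables `W`. -/
def PCon {V : Type u} (φ : CNF V) (W : Set V) : Prop :=
  ∀ α : Set (Lit V), ConsistentPA α → LitsOn α W →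
    ∀ l : Lit V, l.var ∈ W → CNF.Entails (φ ∪ paUnits α) l →
      UnitDeriv (φ ∪ paUnits α) {l} ∨ UnitDeriv (φ ∪ paUnits α) ∅

/-- `φ` is a CNF encoding of the function `f` with input variables `X`
(the remaining variables of `φ` being auxiliary); `f` is assumed to depend
only on the values of the variables in `X`. -/
def IsEncodingOn {V : Type u} (φ : CNF V) (X : Set V) (f : (V → Bool) → Prop) : Prop :=
  ∀ a : V → Bool, f a ↔ ∃ b : V → Bool, (∀ x ∈ X, b x = a x) ∧ CNF.Sat b φ

/-- The positive literal on a variable. -/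
def posL {V : Type u} (x : V) : Lit V := ⟨x, true⟩
/-- The negative literal on a variable. -/
def negL {V : Type u} (x : V) : Lit V := ⟨x, false⟩

/-- `amo*(x)`: all the clauses `¬u ∨ ¬v` for distinct `u, v ∈ x`. -/
def amoStar {V : Type u} (x : Set V) : CNF V :=
  {C | ∃ u ∈ x, ∃ v ∈ x, u ≠ v ∧ C = ({negL u, negL v} : Clause V)}

/-- `eo*(x) = amo*(x)` together with the clause `∨_{v ∈ x} v`. -/
def eoStar {V : Type u} (x : Set V) : CNF V :=
  amoStar x ∪ {(fun v => posL v) '' x}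

/-- The exactly-one constraint on the variables in `x`. -/
def EOpredS {V : Type u} (x : Set V) (a : V → Bool) : Prop :=
  ∃! v, v ∈ x ∧ a v = true


section Helpers

variable {V : Type u}

lemma negate_posL (u : V) : (posL u).negate = negL u := rfl
lemma negate_negL (u : V) : (negL u).negate = posL u := rfl

lemma mem_vars_of_mem {φ : CNF V} {C : Clause V} {l : Lit V}
    (hC : C ∈ φ) (hl : l ∈ C) : l.var ∈ CNF.vars φ := by
  exact Set.mem_iUnion₂.mpr ⟨C, hC, Set.mem_image_of_mem _ hl⟩

lemma sat_mono {φ φ' : CNF V} (h : φ ⊆ φ') {a : V → Bool}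
    (ha : CNF.Sat a φ') : CNF.Sat a φ := fun C hC => ha C (h hC)

lemma sat_union {φ φ' : CNF V} {a : V → Bool} :
    CNF.Sat a (φ ∪ φ') ↔ CNF.Sat a φ ∧ CNF.Sat a φ' := by
  constructor
  · exact fun h => ⟨sat_mono Set.subset_union_left h, sat_mono Set.subset_union_right h⟩
  · rintro ⟨h1, h2⟩ C hC
    rcases hC with hC | hC
    · exact h1 C hC
    · exact h2 C hC

lemma sat_paUnits {γ : Set (Lit V)} {a : V → Bool} :
    CNF.Sat a (paUnits γ) ↔ ∀ g ∈ γ, Lit.eval a g := by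
  constructor
  · intro h g hg
    obtain ⟨m, hm, he⟩ := h {g} ⟨g, hg, rfl⟩
    rcases hm with rfl
    exact he
  · rintro h C ⟨g, hg, rfl⟩
    exact ⟨g, rfl, h g hg⟩

lemma sat_agree {φ : CNF V} {a b : V → Bool}
    (h : ∀ v ∈ CNF.vars φ, a v = b v) (hb : CNF.Sat b φ) : CNF.Sat a φ := by
  intro C hC
  obtain ⟨l, hl, he⟩ := hb C hC
  refine ⟨l, hl, ?_⟩
  unfold Lit.eval at *
  rw [h l.var (mem_vars_of_mem hC hl)]
  exact he

lemma eoStar_sat_iff {x : Set V} {a : V → Bool} :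
    CNF.Sat a (eoStar x) ↔ EOpredS x a := by
  constructor
  · intro h
    obtain ⟨l, hl, he⟩ := h ((fun v => posL v) '' x) (Or.inr rfl)
    obtain ⟨v, hv, rfl⟩ := hl
    refine ⟨v, ⟨hv, he⟩, ?_⟩
    intro w ⟨hw, hwt⟩
    by_contra hne
    obtain ⟨m, hm, hme⟩ := h {negL w, negL v} (Or.inl ⟨w, hw, v, hv, hne, rfl⟩)
    rcases hm with rfl | rfl
    · rw [Lit.eval] at hme; simp [negL] at hme; rw [hme] at hwt; simp at hwt
    · rw [Lit.eval] at hme; simp [negL] at hme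
      simp [Lit.eval, posL, hme] at he
  · rintro ⟨v, ⟨hv, hvt⟩, huniq⟩ C hC
    rcases hC with ⟨u, hu, w, hw, huw, rfl⟩ | hC
    · by_cases hut : a u = true
      · have : u = v := huniq u ⟨hu, hut⟩
        subst this
        refine ⟨negL w, Or.inr rfl, ?_⟩
        simp only [Lit.eval, negL]
        by_contra hc
        have : a w = true := by revert hc; cases (a w) <;> simp
        exact huw ((huniq w ⟨hw, this⟩).symm)
      · refine ⟨negL u, Or.inl rfl, ?_⟩
        simp only [Lit.eval, negL]
        revert hut; cases (a u) <;> simp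
    · rcases hC with rfl
      exact ⟨posL v, ⟨v, hv, rfl⟩, hvt⟩

lemma ud_mono {φ φ' : CNF V} (h : φ ⊆ φ') {C : Clause V}
    (hd : UnitDeriv φ C) : UnitDeriv φ' C := by
  induction hd with
  | base hC => exact .base (h hC)
  | step l hl _ _ ih1 ih2 => exact .step l hl ih1 ih2

lemma ud_cut {φ φ' : CNF V} (h : ∀ D ∈ φ, UnitDeriv φ' D) {C : Clause V}
    (hd : UnitDeriv φ C) : UnitDeriv φ' C := by
  induction hd with
  | base hC => exact h _ hC
  | step l hl _ _ ih1 ih2 => exact .step l hl ih1 ih2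

lemma ud_subset_base {φ : CNF V} {C : Clause V} (hd : UnitDeriv φ C) :
    ∃ C₀ ∈ φ, C ⊆ C₀ := by
  induction hd with
  | base hC => exact ⟨_, hC, subset_rfl⟩
  | step l hl _ _ ih1 _ =>
    obtain ⟨C₀, h₀, hsub⟩ := ih1
    exact ⟨C₀, h₀, Set.diff_subset.trans hsub⟩

lemma ud_unit_pair {φ : CNF V} {g : Lit V}
    (h1 : UnitDeriv φ {g}) (h2 : UnitDeriv φ {g.negate}) : UnitDeriv φ ∅ := by
  have h := UnitDeriv.step (C := {g}) g (Set.mem_singleton g) h1 h2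
  rwa [Set.diff_self] at h

/-- Simulation of unit derivations when the clauses of `φ₂` are "absorbed" by `φ₁`. -/
lemma ud_sim {φ₁ φ₂ : CNF V}
    (H1 : ∀ C ∈ φ₂, ∀ m ∈ C, (∀ g ∈ C, g ≠ m → UnitDeriv φ₁ {g.negate}) →
      (UnitDeriv φ₁ {m} ∨ UnitDeriv φ₁ ∅))
    (H0 : ∀ C ∈ φ₂, (∀ g ∈ C, UnitDeriv φ₁ {g.negate}) → UnitDeriv φ₁ ∅)
    {C : Clause V} (hd : UnitDeriv (φ₁ ∪ φ₂) C) :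
    UnitDeriv φ₁ ∅ ∨ UnitDeriv φ₁ C ∨
      ∃ C₀ ∈ φ₂, C ⊆ C₀ ∧ ∀ g ∈ C₀, g ∉ C → UnitDeriv φ₁ {g.negate} := by
  induction hd with
  | base h =>
    rcases h with h | h
    · exact Or.inr (Or.inl (.base h))
    · exact Or.inr (Or.inr ⟨_, h, subset_rfl, fun g hg hg' => absurd hg hg'⟩)
  | step l hl hC hneg ihC ihneg =>
    have hu : UnitDeriv φ₁ ∅ ∨ UnitDeriv φ₁ {Lit.negate l} := by
      rcases ihneg with h | h | ⟨C₀, hC₀, hsub, hrest⟩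
      · exact Or.inl h
      · exact Or.inr h
      · have hm : l.negate ∈ C₀ := hsub rfl
        have := H1 C₀ hC₀ _ hm (fun g hg hne => hrest g hg hne)
        tauto
    rcases hu with h | hneg1
    · exact Or.inl h
    rcases ihC with h | h | ⟨C₀, hC₀, hsub, hrest⟩
    · exact Or.inl h
    · exact Or.inr (Or.inl (.step l hl h hneg1))
    · refine Or.inr (Or.inr ⟨C₀, hC₀, Set.diff_subset.trans hsub, ?_⟩)
      intro g hg hg'
      by_cases hgl : g = l
      · subst hgl; exact hneg1
      · exact hrest g hg (fun hc => hg' ⟨hc, hgl⟩)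

lemma ud_sim_empty {φ₁ φ₂ : CNF V}
    (H1 : ∀ C ∈ φ₂, ∀ m ∈ C, (∀ g ∈ C, g ≠ m → UnitDeriv φ₁ {g.negate}) →
      (UnitDeriv φ₁ {m} ∨ UnitDeriv φ₁ ∅))
    (H0 : ∀ C ∈ φ₂, (∀ g ∈ C, UnitDeriv φ₁ {g.negate}) → UnitDeriv φ₁ ∅)
    (hd : UnitDeriv (φ₁ ∪ φ₂) ∅) : UnitDeriv φ₁ ∅ := by
  rcases ud_sim H1 H0 hd with h | h | ⟨C₀, hC₀, _, hrest⟩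
  · exact h
  · exact h
  · exact H0 C₀ hC₀ (fun g hg => hrest g hg (by simp))

lemma ud_sim_unit {φ₁ φ₂ : CNF V}
    (H1 : ∀ C ∈ φ₂, ∀ m ∈ C, (∀ g ∈ C, g ≠ m → UnitDeriv φ₁ {g.negate}) →
      (UnitDeriv φ₁ {m} ∨ UnitDeriv φ₁ ∅))
    (H0 : ∀ C ∈ φ₂, (∀ g ∈ C, UnitDeriv φ₁ {g.negate}) → UnitDeriv φ₁ ∅)
    {m : Lit V} (hd : UnitDeriv (φ₁ ∪ φ₂) {m}) :
    UnitDeriv φ₁ {m} ∨ UnitDeriv φ₁ ∅ := by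
  rcases ud_sim H1 H0 hd with h | h | ⟨C₀, hC₀, hsub, hrest⟩
  · exact Or.inr h
  · exact Or.inl h
  · exact H1 C₀ hC₀ m (hsub rfl) (fun g hg hne => hrest g hg hne)

lemma negate_ne (l : Lit V) : l.negate ≠ l := by
  intro h
  have := congrArg Lit.pos h
  simp [Lit.negate] at this

lemma consistent_singleton (g : Lit V) : ConsistentPA ({g} : Set (Lit V)) := by
  intro m hm
  rcases hm with rfl
  intro hc
  rcases hc with hc
  exact negate_ne m hc

lemma consistent_pos_pair (u v : V) : ConsistentPA ({posL u, posL v} : Set (Lit V)) := by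
  intro m hm hneg
  rcases hm with rfl | rfl <;> rcases hneg with h | h <;>
    · have := congrArg Lit.pos h
      simp [Lit.negate, posL] at this

lemma consistent_neg_image (s : Set V) : ConsistentPA (negL '' s) := by
  rintro m ⟨v, hv, rfl⟩ ⟨w, hw, hweq⟩
  have := congrArg Lit.pos hweq
  simp [Lit.negate, negL] at this

end Helpers

/-- If `φ(x,x',y) ∧ eo*(x)` is a PC encoding of a constraint
`f(x,x')` and `eo'(x,z)` is a PC encoding of `EO(x)` with auxiliary variables
`z` such that every literal `l` on a variable of `z` is, modulo `eo'`,
equivalent to a partial assignment `h(l) ⊆ lit(x)`, then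
`φ(x,x',y) ∧ eo'(x,z)` is a PC encoding of `f(x,x')`. -/
theorem stmt6 {V : Type u} (x x' y z : Set V)
    (hxx' : Disjoint x x') (hxy : Disjoint x y) (hxz : Disjoint x z)
    (hx'y : Disjoint x' y) (hx'z : Disjoint x' z) (hyz : Disjoint y z)
    (φ eo' : CNF V)
    (hφv : CNF.vars φ ⊆ x ∪ x' ∪ y)
    (heo'v : CNF.vars eo' ⊆ x ∪ z)
    (f : (V → Bool) → Prop)
    (hf : ∀ a b : V → Bool, (∀ v ∈ x ∪ x', a v = b v) → (f a ↔ f b))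
    (henc : IsEncodingOn (φ ∪ eoStar x) (x ∪ x') f)
    (hpc : PCon (φ ∪ eoStar x) (x ∪ x' ∪ y))
    (henc' : IsEncodingOn eo' x (EOpredS x))
    (hpc' : PCon eo' (x ∪ z))
    (hh : ∀ l : Lit V, l.var ∈ z → ∃ h : Set (Lit V), ConsistentPA h ∧
      (∀ g ∈ h, g.var ∈ x) ∧
      (∀ a : V → Bool, CNF.Sat a eo' → (Lit.eval a l ↔ ∀ g ∈ h, Lit.eval a g))) :
    IsEncodingOn (φ ∪ eo') (x ∪ x') f ∧ PCon (φ ∪ eo') (x ∪ x' ∪ y ∪ z) := by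
  classical
  -- basic semantic facts
  have heoEO : ∀ a : V → Bool, CNF.Sat a eo' → EOpredS x a :=
    fun a ha => (henc' a).mpr ⟨a, fun _ _ => rfl, ha⟩
  have hnotz : ∀ v, v ∈ x ∪ x' ∪ y → v ∉ z := by
    rintro v ((hv | hv) | hv)
    · exact Set.disjoint_left.mp hxz hv
    · exact Set.disjoint_left.mp hx'z hv
    · exact Set.disjoint_left.mp hyz hv
  have hextend : ∀ b : V → Bool, CNF.Sat b φ → EOpredS x b →
      ∃ a : V → Bool, (∀ v, v ∉ z → a v = b v) ∧ CNF.Sat a (φ ∪ eo') := by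
    intro b hbφ hbEO
    obtain ⟨c, hcx, hceo⟩ := (henc' b).mp hbEO
    refine ⟨fun v => if v ∈ z then c v else b v, ?_, ?_⟩
    · intro v hv; simp [hv]
    · rw [sat_union]
      constructor
      · refine sat_agree (fun v hv => ?_) hbφ
        have hvz : v ∉ z := hnotz v (hφv hv)
        simp [hvz]
      · refine sat_agree (fun v hv => ?_) hceo
        rcases heo'v hv with hv' | hv'
        · have hvz : v ∉ z := Set.disjoint_left.mp hxz hv'
          simp [hvz, hcx v hv']
        · simp [hv']
  have part1 : IsEncodingOn (φ ∪ eo') (x ∪ x') f := by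
    intro a
    rw [henc a]
    constructor
    · rintro ⟨b, hag, hb⟩
      have hbφ : CNF.Sat b φ := sat_mono Set.subset_union_left hb
      have hbeo : EOpredS x b := eoStar_sat_iff.mp (sat_mono Set.subset_union_right hb)
      obtain ⟨a', ha'b, ha'⟩ := hextend b hbφ hbeo
      refine ⟨a', fun v hv => ?_, ha'⟩
      have hvz : v ∉ z := by
        rcases hv with hv | hv
        · exact Set.disjoint_left.mp hxz hv
        · exact Set.disjoint_left.mp hx'z hv
      rw [ha'b v hvz]; exact hag v hv
    · rintro ⟨b, hag, hb⟩
      have hbeo : CNF.Sat b eo' := sat_mono Set.subset_union_right hb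
      refine ⟨b, hag, ?_⟩
      rw [sat_union]
      exact ⟨sat_mono Set.subset_union_left hb, eoStar_sat_iff.mpr (heoEO b hbeo)⟩
  refine ⟨part1, ?_⟩
  -- entailment facts about eo'
  have hent_amo : ∀ u ∈ x, ∀ v ∈ x, u ≠ v →
      CNF.Entails (eo' ∪ paUnits {posL v}) (negL u) := by
    intro u hu v hv huv a ha
    obtain ⟨w, ⟨hwx, hwt⟩, huniq⟩ := heoEO a (sat_mono Set.subset_union_left ha)
    have hv' := sat_paUnits.mp (sat_mono Set.subset_union_right ha) (posL v) rfl
    simp only [Lit.eval, posL] at hv'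
    have hveq : v = w := huniq v ⟨hv, hv'⟩
    show a u = false
    by_contra hc
    have hut : a u = true := by revert hc; cases (a u) <;> simp
    exact huv (((huniq u ⟨hu, hut⟩).trans hveq.symm))
  have hent_big : ∀ u ∈ x, CNF.Entails (eo' ∪ paUnits (negL '' (x \ {u}))) (posL u) := by
    intro u hu a ha
    obtain ⟨w, ⟨hwx, hwt⟩, _⟩ := heoEO a (sat_mono Set.subset_union_left ha)
    have hunits := sat_paUnits.mp (sat_mono Set.subset_union_right ha)
    have hwu : w = u := by
      by_contra hne
      have := hunits (negL w) ⟨w, ⟨hwx, hne⟩, rfl⟩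
      simp only [Lit.eval, negL] at this
      rw [this] at hwt; exact Bool.false_ne_true hwt
    show a u = true
    rw [← hwu]; exact hwt
  have hunsat_amo : ∀ u ∈ x, ∀ v ∈ x, u ≠ v → ∀ m : Lit V,
      CNF.Entails (eo' ∪ paUnits {posL u, posL v}) m := by
    intro u hu v hv huv m a ha
    exfalso
    obtain ⟨w, _, huniq⟩ := heoEO a (sat_mono Set.subset_union_left ha)
    have hunits := sat_paUnits.mp (sat_mono Set.subset_union_right ha)
    have h1 := hunits (posL u) (Or.inl rfl)
    have h2 := hunits (posL v) (Or.inr rfl)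
    simp only [Lit.eval, posL] at h1 h2
    exact huv ((huniq u ⟨hu, h1⟩).trans (huniq v ⟨hv, h2⟩).symm)
  -- the cut principle for supersets of eo'
  have hcutgen : ∀ (φ₁ : CNF V), eo' ⊆ φ₁ → ∀ (S : Set (Lit V)),
      (∀ g ∈ S, UnitDeriv φ₁ {g}) → ∀ {E : Clause V},
      UnitDeriv (eo' ∪ paUnits S) E → UnitDeriv φ₁ E := by
    intro φ₁ hsub S hS E hE
    refine ud_cut ?_ hE
    rintro D (hD | ⟨g, hg, rfl⟩)
    · exact .base (hsub hD)
    · exact hS g hg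
  -- absorption of eo*(x) clauses
  have habs1 : ∀ (φ₁ : CNF V), eo' ⊆ φ₁ →
      ∀ C ∈ eoStar x, ∀ m ∈ C, (∀ g ∈ C, g ≠ m → UnitDeriv φ₁ {g.negate}) →
        (UnitDeriv φ₁ {m} ∨ UnitDeriv φ₁ ∅) := by
    intro φ₁ hsub C hC m hm hprev
    rcases hC with ⟨u, hu, v, hv, huv, rfl⟩ | hC
    · rcases hm with rfl | rfl
      · have hne : negL v ≠ negL u := fun h => huv (congrArg Lit.var h).symm
        have hd : UnitDeriv φ₁ {posL v} := by
          have := hprev (negL v) (Or.inr rfl) hne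
          rwa [negate_negL] at this
        have hS : ∀ g ∈ ({posL v} : Set (Lit V)), UnitDeriv φ₁ {g} := by
          intro g hg; rcases hg with rfl; exact hd
        have := hpc' {posL v} (consistent_singleton _)
          (by intro m hm; rcases hm with rfl; exact Or.inl hv)
          (negL u) (Or.inl hu) (hent_amo u hu v hv huv)
        rcases this with h | h
        · exact Or.inl (hcutgen φ₁ hsub _ hS h)
        · exact Or.inr (hcutgen φ₁ hsub _ hS h)
      · have hne : negL u ≠ negL v := fun h => huv (congrArg Lit.var h)
        have hd : UnitDeriv φ₁ {posL u} := by
          have := hprev (negL u) (Or.inl rfl) hne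
          rwa [negate_negL] at this
        have hS : ∀ g ∈ ({posL u} : Set (Lit V)), UnitDeriv φ₁ {g} := by
          intro g hg; rcases hg with rfl; exact hd
        have := hpc' {posL u} (consistent_singleton _)
          (by intro m hm; rcases hm with rfl; exact Or.inl hu)
          (negL v) (Or.inl hv) (hent_amo v hv u hu (Ne.symm huv))
        rcases this with h | h
        · exact Or.inl (hcutgen φ₁ hsub _ hS h)
        · exact Or.inr (hcutgen φ₁ hsub _ hS h)
    · rcases hC with rfl
      obtain ⟨u, hu, rfl⟩ := hm
      have hS : ∀ g ∈ negL '' (x \ {u}), UnitDeriv φ₁ {g} := by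
        rintro g ⟨v, ⟨hv, hvu⟩, rfl⟩
        have hne : posL v ≠ posL u := fun h => hvu (congrArg Lit.var h)
        have := hprev (posL v) ⟨v, hv, rfl⟩ hne
        rwa [negate_posL] at this
      have hlits : LitsOn (negL '' (x \ {u})) (x ∪ z) := by
        rintro g ⟨v, ⟨hv, _⟩, rfl⟩; exact Or.inl hv
      have := hpc' _ (consistent_neg_image (x \ {u})) hlits (posL u) (Or.inl hu) (hent_big u hu)
      rcases this with h | h
      · exact Or.inl (hcutgen φ₁ hsub _ hS h)
      · exact Or.inr (hcutgen φ₁ hsub _ hS h)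
  have habs0 : ∀ (φ₁ : CNF V), eo' ⊆ φ₁ →
      ∀ C ∈ eoStar x, (∀ g ∈ C, UnitDeriv φ₁ {g.negate}) → UnitDeriv φ₁ ∅ := by
    intro φ₁ hsub C hC hall
    rcases hC with ⟨u, hu, v, hv, huv, rfl⟩ | hC
    · have hdu : UnitDeriv φ₁ {posL u} := by
        have := hall (negL u) (Or.inl rfl); rwa [negate_negL] at this
      have hdv : UnitDeriv φ₁ {posL v} := by
        have := hall (negL v) (Or.inr rfl); rwa [negate_negL] at this
      have hS : ∀ g ∈ ({posL u, posL v} : Set (Lit V)), UnitDeriv φ₁ {g} := by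
        rintro g (rfl | rfl)
        · exact hdu
        · exact hdv
      have hlits : LitsOn ({posL u, posL v} : Set (Lit V)) (x ∪ z) := by
        rintro g (rfl | rfl)
        · exact Or.inl hu
        · exact Or.inl hv
      have hres := hpc' _ (consistent_pos_pair u v) hlits (negL u) (Or.inl hu)
        (hunsat_amo u hu v hv huv (negL u))
      have hbot' : UnitDeriv (eo' ∪ paUnits {posL u, posL v}) ∅ := by
        rcases hres with h | h
        · refine ud_unit_pair (g := posL u) (.base (Or.inr ⟨posL u, Or.inl rfl, rfl⟩)) ?_
          rwa [negate_posL]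
        · exact h
      exact hcutgen φ₁ hsub _ hS hbot'
    · rcases hC with rfl
      by_cases hxne : x.Nonempty
      · obtain ⟨u, hu⟩ := hxne
        have hS : ∀ g ∈ negL '' x, UnitDeriv φ₁ {g} := by
          rintro g ⟨v, hv, rfl⟩
          have := hall (posL v) ⟨v, hv, rfl⟩
          rwa [negate_posL] at this
        have hlits : LitsOn (negL '' x) (x ∪ z) := by
          rintro g ⟨v, hv, rfl⟩; exact Or.inl hv
        have hentu : CNF.Entails (eo' ∪ paUnits (negL '' x)) (posL u) := by
          intro a ha
          exfalso
          obtain ⟨w, ⟨hwx, hwt⟩, _⟩ := heoEO a (sat_mono Set.subset_union_left ha)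
          have := sat_paUnits.mp (sat_mono Set.subset_union_right ha) (negL w) ⟨w, hwx, rfl⟩
          simp only [Lit.eval, negL] at this
          rw [this] at hwt; exact Bool.false_ne_true hwt
        have hres := hpc' _ (consistent_neg_image x) hlits (posL u) (Or.inl hu) hentu
        have hbot' : UnitDeriv (eo' ∪ paUnits (negL '' x)) ∅ := by
          rcases hres with h | h
          · refine ud_unit_pair (g := posL u) h ?_
            rw [negate_posL]
            exact .base (Or.inr ⟨negL u, ⟨u, hu, rfl⟩, rfl⟩)
          · exact h
        exact hcutgen φ₁ hsub _ hS hbot'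
      · have hxe : x = ∅ := Set.not_nonempty_iff_eq_empty.mp hxne
        have heounsat : ∀ a : V → Bool, ¬ CNF.Sat a eo' := by
          intro a ha
          obtain ⟨w, ⟨hwx, _⟩, _⟩ := heoEO a ha
          rw [hxe] at hwx
          exact hwx
        by_cases hzne : z.Nonempty
        · obtain ⟨w, hw⟩ := hzne
          have hcons0 : ConsistentPA (∅ : Set (Lit V)) := fun m hm => absurd hm (Set.notMem_empty m)
          have hlit0 : LitsOn (∅ : Set (Lit V)) (x ∪ z) := fun m hm => absurd hm (Set.notMem_empty m)
          have he1 : CNF.Entails (eo' ∪ paUnits ∅) (posL w) := fun a ha =>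
            absurd (sat_mono Set.subset_union_left ha) (heounsat a)
          have he2 : CNF.Entails (eo' ∪ paUnits ∅) (negL w) := fun a ha =>
            absurd (sat_mono Set.subset_union_left ha) (heounsat a)
          have h1 := hpc' ∅ hcons0 hlit0 (posL w) (Or.inr hw) he1
          have h2 := hpc' ∅ hcons0 hlit0 (negL w) (Or.inr hw) he2
          have hbot' : UnitDeriv (eo' ∪ paUnits ∅) ∅ := by
            rcases h1 with h1 | h1
            · rcases h2 with h2 | h2
              · refine ud_unit_pair (g := posL w) h1 ?_
                rwa [negate_posL]
              · exact h2
            · exact h1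
          exact hcutgen φ₁ hsub ∅ (fun g hg => absurd hg (Set.notMem_empty g)) hbot'
        · have hze : z = ∅ := Set.not_nonempty_iff_eq_empty.mp hzne
          have hns : ¬ CNF.Sat (fun _ => true) eo' := heounsat _
          rw [CNF.Sat] at hns
          push_neg at hns
          obtain ⟨C', hC', _⟩ := hns
          have hC'e : C' = ∅ := by
            by_contra hne
            obtain ⟨g, hg⟩ := Set.nonempty_iff_ne_empty.mpr hne
            have := heo'v (mem_vars_of_mem hC' hg)
            rw [hxe, hze] at this
            simp at this
          rw [hC'e] at hC'
          exact .base (hsub hC')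
  -- now the PC proof
  intro α hαcons hαlits l hlvar hent
  by_cases hbot : UnitDeriv ((φ ∪ eo') ∪ paUnits α) ∅
  · exact Or.inr hbot
  left
  by_contra hnl
  set β : Set (Lit V) := {g | UnitDeriv ((φ ∪ eo') ∪ paUnits α) {g}} with hβdef
  have hαβ : α ⊆ β := fun g hg => UnitDeriv.base (Or.inr ⟨g, hg, rfl⟩)
  have hβlift : ∀ {E : Clause V}, UnitDeriv ((φ ∪ eo') ∪ paUnits β) E →
      UnitDeriv ((φ ∪ eo') ∪ paUnits α) E := by
    intro E hE
    refine ud_cut ?_ hE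
    rintro D (hD | ⟨g, hg, rfl⟩)
    · exact .base (Or.inl hD)
    · exact hg
  have hnobotβ : ¬ UnitDeriv ((φ ∪ eo') ∪ paUnits β) ∅ := fun h => hbot (hβlift h)
  have hclosed : ∀ {g : Lit V}, UnitDeriv ((φ ∪ eo') ∪ paUnits β) {g} → g ∈ β :=
    fun h => hβlift h
  have hlβ : l ∉ β := hnl
  have hβcons : ConsistentPA β := fun g hg hgneg => hbot (ud_unit_pair hg hgneg)
  have hβlits : LitsOn β (x ∪ x' ∪ y ∪ z) := by
    intro g hg
    obtain ⟨C₀, hC₀, hsub⟩ := ud_subset_base hg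
    have hgC₀ : g ∈ C₀ := hsub rfl
    rcases hC₀ with (hC₀ | hC₀) | ⟨m, hm, heq⟩
    · exact Or.inl (hφv (mem_vars_of_mem hC₀ hgC₀))
    · rcases heo'v (mem_vars_of_mem hC₀ hgC₀) with h | h
      · exact Or.inl (Or.inl (Or.inl h))
      · exact Or.inr h
    · rw [← heq] at hgC₀
      rcases hgC₀ with rfl
      exact hαlits g hm
  have hzconj : ∀ g ∈ β, g.var ∈ z →
      ∃ hset : Set (Lit V), (∀ q ∈ hset, q.var ∈ x) ∧
        (∀ a : V → Bool, CNF.Sat a eo' → (Lit.eval a g ↔ ∀ q ∈ hset, Lit.eval a q)) ∧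
        (∀ q ∈ hset, q ∈ β) := by
    intro g hgβ hgz
    obtain ⟨hset, _, hvars, hiff⟩ := hh g hgz
    refine ⟨hset, hvars, hiff, ?_⟩
    intro q hq
    have hub := hpc' {g} (consistent_singleton g)
      (by intro m hm; rcases hm with rfl; exact Or.inr hgz)
      q (Or.inl (hvars q hq)) ?entail
    case entail =>
      intro a ha
      have h1 := sat_mono Set.subset_union_left ha
      have h2 := sat_paUnits.mp (sat_mono Set.subset_union_right ha) g rfl
      exact ((hiff a h1).mp h2) q hq
    have hmono : eo' ∪ paUnits {g} ⊆ (φ ∪ eo') ∪ paUnits β := by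
      rintro D (hD | ⟨m, hm, rfl⟩)
      · exact Or.inl (Or.inr hD)
      · rcases hm with rfl
        exact Or.inr ⟨m, hgβ, rfl⟩
    rcases hub with h | h
    · exact hclosed (ud_mono hmono h)
    · exact absurd (ud_mono hmono h) hnobotβ
  set βA : Set (Lit V) := {g ∈ β | g.var ∈ x ∪ x' ∪ y} with hβAdef
  have hβAβ : βA ⊆ β := fun g hg => hg.1
  set φ₁ : CNF V := (φ ∪ eo') ∪ paUnits βA with hφ₁def
  have hsubeo : eo' ⊆ φ₁ := fun D hD => Or.inl (Or.inr hD)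
  have H1 := habs1 φ₁ hsubeo
  have H0 := habs0 φ₁ hsubeo
  have hφ₁β : ∀ {E : Clause V}, UnitDeriv φ₁ E → UnitDeriv ((φ ∪ eo') ∪ paUnits β) E := by
    intro E hE
    refine ud_mono ?_ hE
    exact Set.union_subset_union_right _ (Set.image_mono hβAβ)
  have hAβA : ∀ {E : Clause V}, UnitDeriv ((φ ∪ eoStar x) ∪ paUnits βA) E →
      UnitDeriv (φ₁ ∪ eoStar x) E := by
    intro E hE
    refine ud_mono ?_ hE
    rintro D ((hD | hD) | hD)
    · exact Or.inl (Or.inl (Or.inl hD))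
    · exact Or.inr hD
    · exact Or.inl (Or.inr hD)
  have hpush : ∀ p : Lit V, p.var ∈ x ∪ x' ∪ y →
      CNF.Entails ((φ ∪ eoStar x) ∪ paUnits βA) p → p ∈ β := by
    intro p hp hentp
    have hβAcons : ConsistentPA βA := fun g hg hneg => hβcons g hg.1 hneg.1
    have hβAlits : LitsOn βA (x ∪ x' ∪ y) := fun g hg => hg.2
    rcases hpc βA hβAcons hβAlits p hp hentp with h | h
    · rcases ud_sim_unit H1 H0 (hAβA h) with h' | h'
      · exact hclosed (hφ₁β h')
      · exact absurd (hφ₁β h') hnobotβ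
    · exact absurd (hφ₁β (ud_sim_empty H1 H0 (hAβA h))) hnobotβ
  have hcounter : ∀ p : Lit V, p.var ∈ x ∪ x' ∪ y → p ∉ β →
      ∃ a : V → Bool, CNF.Sat a ((φ ∪ eo') ∪ paUnits β) ∧ ¬ Lit.eval a p := by
    intro p hp hpβ
    have hne : ¬ CNF.Entails ((φ ∪ eoStar x) ∪ paUnits βA) p :=
      fun h => hpβ (hpush p hp h)
    rw [CNF.Entails] at hne
    push_neg at hne
    obtain ⟨b, hb, hbp⟩ := hne
    have hbφ : CNF.Sat b φ := sat_mono (fun D hD => Or.inl (Or.inl hD)) hb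
    have hbEO : EOpredS x b := eoStar_sat_iff.mp (sat_mono (fun D hD => Or.inl (Or.inr hD)) hb)
    have hbβA : ∀ g ∈ βA, Lit.eval b g :=
      sat_paUnits.mp (sat_mono (fun D hD => Or.inr hD) hb)
    obtain ⟨a, haz, hasat⟩ := hextend b hbφ hbEO
    have haeo : CNF.Sat a eo' := sat_mono Set.subset_union_right hasat
    have haβA : ∀ g ∈ βA, Lit.eval a g := by
      intro g hg
      have hb' := hbβA g hg
      unfold Lit.eval at hb' ⊢
      rw [haz g.var (hnotz _ hg.2)]
      exact hb'
    refine ⟨a, ?_, ?_⟩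
    · rw [sat_union]
      refine ⟨hasat, ?_⟩
      rw [sat_paUnits]
      intro g hg
      rcases hβlits g hg with hg' | hg'
      · exact haβA g ⟨hg, hg'⟩
      · obtain ⟨hset, hvars, hiff, hmem⟩ := hzconj g hg hg'
        refine (hiff a haeo).mpr ?_
        intro q hq
        exact haβA q ⟨hmem q hq, Or.inl (Or.inl (hvars q hq))⟩
    · unfold Lit.eval
      rw [haz p.var (hnotz _ hp)]
      exact hbp
  have hsatall : ∀ a : V → Bool, CNF.Sat a ((φ ∪ eo') ∪ paUnits β) → Lit.eval a l := by
    intro a ha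
    refine hent a (sat_mono ?_ ha)
    rintro D (hD | ⟨g, hg, rfl⟩)
    · exact Or.inl hD
    · exact Or.inr ⟨g, hαβ hg, rfl⟩
  rcases hlvar with hl' | hl'
  · obtain ⟨a, ha, hal⟩ := hcounter l hl' hlβ
    exact hal (hsatall a ha)
  · obtain ⟨hset, hhcons, hvars, hiff⟩ := hh l hl'
    by_cases hall : ∀ q ∈ hset, q ∈ β
    · have hentl : CNF.Entails (eo' ∪ paUnits hset) l := by
        intro a ha
        exact (hiff a (sat_mono Set.subset_union_left ha)).mpr
          (sat_paUnits.mp (sat_mono Set.subset_union_right ha))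
      have hlitsh : LitsOn hset (x ∪ z) := fun q hq => Or.inl (hvars q hq)
      have hres := hpc' hset hhcons hlitsh l (Or.inr hl') hentl
      have hmono2 : eo' ∪ paUnits hset ⊆ (φ ∪ eo') ∪ paUnits β := by
        rintro D (hD | ⟨q, hq, rfl⟩)
        · exact Or.inl (Or.inr hD)
        · exact Or.inr ⟨q, hall q hq, rfl⟩
      rcases hres with h | h
      · exact hlβ (hclosed (ud_mono hmono2 h))
      · exact hnobotβ (ud_mono hmono2 h)
    · push_neg at hall
      obtain ⟨q, hq, hqβ⟩ := hall
      obtain ⟨a, ha, haq⟩ := hcounter q (Or.inl (Or.inl (hvars q hq))) hqβ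
      have haeo : CNF.Sat a eo' := sat_mono (fun D hD => Or.inl (Or.inr hD)) ha
      exact haq ((hiff a haeo).mp (hsatall a ha) q hq)
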